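/- Let S ⊂ ℝ^n, 0 ≤ m ≤ n, and let μ be a Radon measure on ℝ^n with supp(μ) = S and a constant c > 0 such that μ(B_E(x,r)) = c·r^m for all x ∈ S and r > 0, where B_E denotes closed Euclidean balls. Equip ℝ^{n+1} with the metric d((x',t),(y',u)) = (|x'-y'|⁴ + (t-u)²)^{1/4} and let ν = μ ⊗ ℒ¹ be the product of μ with one-dimensional Lebesgue measure. Then for every (x,t) ∈ S × ℝ and every r > 0, ν(B_d((x,t),r)) = c'·r^{m+2}, where c' = c·∫_{-1}^{1} (1-τ²)^{m/4} dτ; in particular ν is an (m+2)-uniform measure on (ℝ^{n+1}, d) with support S × ℝ. -/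

import Mathlib

open MeasureTheory Set Metric ENNReal

noncomputable section

/-- `ℝ^{n+1}`, viewed as `ℝⁿ × ℝ`. -/
abbrev Sp (n : ℕ) := EuclideanSpace ℝ (Fin n) × ℝ

/-- The metric `d((x',t),(y',u)) = (|x'-y'|⁴ + (t-u)²)^{1/4}` on `ℝ^{n+1}`. -/
def dK {n : ℕ} (x y : Sp n) : ℝ := (‖x.1 - y.1‖ ^ 4 + (x.2 - y.2) ^ 2) ^ ((1 : ℝ) / 4)

/-- The closed `d`-ball of center `x` and radius `r`. -/
def ballK {n : ℕ} (x : Sp n) (r : ℝ) : Set (Sp n) := {y | dK x y ≤ r}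

/-- The support of a measure on `(ℝ^{n+1}, d)`. -/
def suppK {n : ℕ} (ν : Measure (Sp n)) : Set (Sp n) := {x | ∀ r > 0, 0 < ν (ballK x r)}

lemma contRpow (q : ℝ) (hq : 0 ≤ q) : Continuous fun x : ℝ => x ^ q :=
  continuous_iff_continuousAt.2 fun x => Real.continuousAt_rpow_const x q (Or.inr hq)

lemma rpow_quarter_pow4 {a : ℝ} (ha : 0 ≤ a) : (a ^ ((1:ℝ)/4)) ^ (4:ℕ) = a := by
  rw [← Real.rpow_natCast (a ^ ((1:ℝ)/4)) 4, ← Real.rpow_mul ha]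
  norm_num

lemma key_integral (m : ℕ) (t r : ℝ) (hr : 0 < r) :
    (∫ u in (t - r^2)..(t + r^2), (r^4 - (u-t)^2) ^ ((m:ℝ)/4)) =
      (∫ τ in (-1:ℝ)..1, (1 - τ^2) ^ ((m:ℝ)/4)) * r^(m+2) := by
  have hr2 : (r:ℝ)^2 ≠ 0 := by positivity
  have h := intervalIntegral.integral_comp_mul_add
    (fun u => (r^4 - (u-t)^2) ^ ((m:ℝ)/4)) hr2 t (a := -1) (b := 1)
  have hbounds1 : r^2 * (-1) + t = t - r^2 := by ring
  have hbounds2 : r^2 * 1 + t = t + r^2 := by ring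
  rw [hbounds1, hbounds2] at h
  have h2 : (∫ x in (-1:ℝ)..1, (r^4 - (r^2 * x + t - t)^2) ^ ((m:ℝ)/4))
      = r^m * ∫ τ in (-1:ℝ)..1, (1 - τ^2) ^ ((m:ℝ)/4) := by
    rw [← intervalIntegral.integral_const_mul]
    apply intervalIntegral.integral_congr
    intro x hx
    rw [Set.uIcc_of_le (by norm_num : (-1:ℝ) ≤ 1)] at hx
    have hx2 : 0 ≤ 1 - x^2 := by nlinarith [hx.1, hx.2]
    show (r^4 - (r^2 * x + t - t)^2) ^ ((m:ℝ)/4) = r^m * (1 - x^2) ^ ((m:ℝ)/4)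
    have heq : r^4 - (r^2 * x + t - t)^2 = r^4 * (1 - x^2) := by ring
    rw [heq, Real.mul_rpow (by positivity) hx2]
    congr 1
    rw [← Real.rpow_natCast r 4, ← Real.rpow_mul hr.le, ← Real.rpow_natCast r m]
    congr 1
    ring
  rw [h2, smul_eq_mul] at h
  have h3 : (∫ u in (t - r^2)..(t + r^2), (r^4 - (u-t)^2) ^ ((m:ℝ)/4))
      = r^2 * (r^m * ∫ τ in (-1:ℝ)..1, (1 - τ^2) ^ ((m:ℝ)/4)) := by
    rw [h]; field_simp
  rw [h3]; ring

lemma I_pos (m : ℕ) : 0 < ∫ τ in (-1:ℝ)..1, (1 - τ^2) ^ ((m:ℝ)/4) := by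
  have hq : (0:ℝ) ≤ (m:ℝ)/4 := by positivity
  have hcont : Continuous fun τ : ℝ => (1 - τ^2) ^ ((m:ℝ)/4) :=
    (contRpow _ hq).comp (by continuity)
  refine intervalIntegral.intervalIntegral_pos_of_pos_on
    (hcont.intervalIntegrable _ _) (fun x hx => ?_) (by norm_num)
  exact Real.rpow_pos_of_pos (by nlinarith [hx.1, hx.2]) _

lemma dK_le_iff {n : ℕ} {z y : Sp n} {r : ℝ} (hr : 0 ≤ r) :
    dK z y ≤ r ↔ ‖z.1 - y.1‖^4 + (z.2 - y.2)^2 ≤ r^4 := by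
  have ha : (0:ℝ) ≤ ‖z.1 - y.1‖^4 + (z.2 - y.2)^2 := by positivity
  rw [dK]
  constructor
  · intro h
    calc ‖z.1 - y.1‖^4 + (z.2 - y.2)^2
        = ((‖z.1 - y.1‖^4 + (z.2 - y.2)^2) ^ ((1:ℝ)/4)) ^ (4:ℕ) := (rpow_quarter_pow4 ha).symm
      _ ≤ r ^ (4:ℕ) := pow_le_pow_left₀ (Real.rpow_nonneg ha _) h 4
  · intro h
    have := Real.rpow_le_rpow ha h (by norm_num : (0:ℝ) ≤ 1/4)
    rwa [← Real.rpow_natCast r 4, ← Real.rpow_mul hr, (by norm_num : (4:ℕ) * ((1:ℝ)/4) = 1),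
      Real.rpow_one] at this

set_option maxHeartbeats 1000000 in
lemma measurable_ballK {n : ℕ} (z : Sp n) (r : ℝ) : MeasurableSet (ballK z r) := by
  have : Continuous fun y : Sp n => dK z y := by
    apply (contRpow ((1:ℝ)/4) (by norm_num)).comp
    continuity
  exact this.measurable measurableSet_Iic

set_option maxHeartbeats 2000000 in
/-- If `μ` is an `m`-uniform Radon measure on `ℝⁿ` (with respect to the Euclidean metric),
with support `S` and `μ(B_E(x,r)) = c rᵐ` for `x ∈ S`, `r > 0`, then `ν = μ ⊗ ℒ¹` satisfies
`ν(B_d((x,t),r)) = c' r^{m+2}` for all `(x,t) ∈ S × ℝ`, `r > 0`, where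
`c' = c ∫_{-1}^{1} (1-τ²)^{m/4} dτ`; in particular `ν` is an `(m+2)`-uniform measure on
`(ℝ^{n+1}, d)` with support `S × ℝ`. -/
theorem statement14 (n m : ℕ) (hm : m ≤ n) (S : Set (EuclideanSpace ℝ (Fin n)))
    (μ : Measure (EuclideanSpace ℝ (Fin n))) [μ.Regular]
    (hsupp : {x | ∀ r > 0, 0 < μ (closedBall x r)} = S)
    (c : ℝ) (hc : 0 < c)
    (hunif : ∀ x ∈ S, ∀ r : ℝ, 0 < r → μ (closedBall x r) = ENNReal.ofReal (c * r ^ m)) :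
    (∀ x ∈ S, ∀ t : ℝ, ∀ r : ℝ, 0 < r →
      (μ.prod volume) (ballK ((x, t) : Sp n) r) =
        ENNReal.ofReal ((c * ∫ τ in (-1 : ℝ)..1, (1 - τ ^ 2) ^ ((m : ℝ) / 4)) * r ^ (m + 2))) ∧
    suppK (μ.prod volume) = S ×ˢ (Set.univ : Set ℝ) := by
  have hq : (0:ℝ) ≤ (m:ℝ)/4 := by positivity
  set I := ∫ τ in (-1:ℝ)..1, (1 - τ^2) ^ ((m:ℝ)/4) with hI
  have hIpos : 0 < I := I_pos m
  haveI : SigmaFinite μ := inferInstance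
  have main : ∀ x ∈ S, ∀ t r : ℝ, 0 < r →
      (μ.prod volume) (ballK ((x, t) : Sp n) r) = ENNReal.ofReal ((c * I) * r ^ (m + 2)) := by
    intro x hx t r hr
    rw [Measure.prod_apply_symm (measurable_ballK _ _)]
    have hae : (fun u => μ ((fun y => (y, u)) ⁻¹' ballK ((x,t) : Sp n) r)) =ᵐ[volume]
        fun u => (Ioo (t - r^2) (t + r^2)).indicator
          (fun u => ENNReal.ofReal (c * (r^4 - (u - t)^2) ^ ((m:ℝ)/4))) u := by
      have hne : ∀ᵐ u : ℝ, u ∉ ({t - r^2, t + r^2} : Set ℝ) := by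
        rw [← measure_eq_zero_iff_ae_notMem]
        exact (((Set.finite_singleton _).insert _).countable).measure_zero _
      filter_upwards [hne] with u hu
      simp only [Set.mem_insert_iff, Set.mem_singleton_iff, not_or] at hu
      by_cases hb : 0 < r^4 - (u - t)^2
      · set b := r^4 - (u - t)^2 with hbdef
        set ρ := b ^ ((1:ℝ)/4) with hρ
        have hρpos : 0 < ρ := Real.rpow_pos_of_pos hb _
        have hρ4 : ρ ^ (4:ℕ) = b := rpow_quarter_pow4 hb.le
        have htu : (t - u)^2 = (u - t)^2 := by ring
        have hslice : (fun y => (y, u)) ⁻¹' ballK ((x,t) : Sp n) r = closedBall x ρ := by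
          ext y
          constructor
          · intro h
            have h00 : ((y,u) : Sp n) ∈ ballK ((x,t) : Sp n) r := h
            have h0 : dK ((x,t) : Sp n) ((y,u) : Sp n) ≤ r := h00
            have h'' := (dK_le_iff (z := ((x,t) : Sp n)) (y := ((y,u) : Sp n)) hr.le).1 h0
            have h' : ‖x - y‖^4 + (t - u)^2 ≤ r^4 := h''
            have h4 : ‖x - y‖^(4:ℕ) ≤ ρ^(4:ℕ) := by
              rw [hρ4, hbdef]; linarith [htu, h']
            have h5 := (pow_le_pow_iff_left₀ (norm_nonneg _) hρpos.le (by norm_num)).1 h4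
            simpa [mem_closedBall, dist_eq_norm, norm_sub_rev] using h5
          · intro h
            have h5 : ‖x - y‖ ≤ ρ := by
              simpa [mem_closedBall, dist_eq_norm, norm_sub_rev] using h
            have h4 : ‖x - y‖^(4:ℕ) ≤ b := by
              rw [← hρ4]; exact pow_le_pow_left₀ (norm_nonneg _) h5 4
            show ((y,u) : Sp n) ∈ ballK ((x,t) : Sp n) r
            show dK ((x,t) : Sp n) ((y, u) : Sp n) ≤ r
            rw [dK_le_iff (z := ((x,t) : Sp n)) (y := ((y,u) : Sp n)) hr.le]
            show ‖x - y‖^4 + (t - u)^2 ≤ r^4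
            rw [hbdef] at h4
            linarith [htu, h4]
        have hmem : u ∈ Ioo (t - r^2) (t + r^2) := by
          constructor <;> nlinarith [hb, hr]
        rw [hslice, hunif x hx ρ hρpos, Set.indicator_of_mem hmem]
        congr 2
        rw [hρ, ← Real.rpow_natCast (b ^ ((1:ℝ)/4)) m, ← Real.rpow_mul hb.le]
        congr 1
        ring
      · have hle' : r^4 - (u - t)^2 ≤ 0 := not_lt.1 hb
        have hne' : (u - t)^2 ≠ r^4 := by
          intro h
          have hprod : (u - (t + r^2)) * (u - (t - r^2)) = 0 := by linear_combination h
          rcases mul_eq_zero.1 hprod with h' | h'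
          · exact hu.2 (by linarith)
          · exact hu.1 (by linarith)
        have hgt : r^4 < (u - t)^2 := lt_of_le_of_ne (by linarith) (Ne.symm hne')
        have hslice : (fun y => (y, u)) ⁻¹' ballK ((x,t) : Sp n) r = ∅ := by
          ext y
          simp only [Set.mem_empty_iff_false, iff_false]
          intro hy
          have h00 : ((y,u) : Sp n) ∈ ballK ((x,t) : Sp n) r := hy
          have h0 : dK ((x,t) : Sp n) ((y,u) : Sp n) ≤ r := h00
          have h'' := (dK_le_iff (z := ((x,t) : Sp n)) (y := ((y,u) : Sp n)) hr.le).1 h0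
          have h' : ‖x - y‖^4 + (t - u)^2 ≤ r^4 := h''
          nlinarith [pow_nonneg (norm_nonneg (x - y)) 4, h', hgt]
        have hnotmem : u ∉ Ioo (t - r^2) (t + r^2) := by
          intro hmem
          nlinarith [hmem.1, hmem.2]
        rw [hslice, Set.indicator_of_notMem hnotmem, measure_empty]
    rw [lintegral_congr_ae hae, lintegral_indicator measurableSet_Ioo _]
    have hcont : Continuous fun u : ℝ => c * (r^4 - (u - t)^2) ^ ((m:ℝ)/4) :=
      continuous_const.mul ((contRpow _ hq).comp (by continuity))
    have hle : t - r^2 ≤ t + r^2 := by nlinarith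
    have hint : IntegrableOn (fun u : ℝ => c * (r^4 - (u - t)^2) ^ ((m:ℝ)/4))
        (Ioo (t - r^2) (t + r^2)) volume :=
      (hcont.integrableOn_Icc).mono_set Set.Ioo_subset_Icc_self
    have hnn : 0 ≤ᵐ[volume.restrict (Ioo (t - r^2) (t + r^2))]
        fun u : ℝ => c * (r^4 - (u - t)^2) ^ ((m:ℝ)/4) := by
      filter_upwards [ae_restrict_mem measurableSet_Ioo] with u hu
      have : 0 < r^4 - (u - t)^2 := by nlinarith [hu.1, hu.2]
      positivity
    rw [← ofReal_integral_eq_lintegral_ofReal hint hnn]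
    congr 1
    rw [← integral_Ioc_eq_integral_Ioo, ← intervalIntegral.integral_of_le hle,
      intervalIntegral.integral_const_mul, key_integral m t r hr]
    ring
  refine ⟨main, ?_⟩
  ext ⟨y, u⟩
  simp only [suppK, Set.mem_setOf_eq, Set.mem_prod, Set.mem_univ, and_true]
  constructor
  · intro h
    by_contra hp
    rw [← hsupp] at hp
    simp only [Set.mem_setOf_eq] at hp
    push_neg at hp
    obtain ⟨r0, hr0, hr0z⟩ := hp
    have hz : μ (closedBall y r0) = 0 := le_antisymm hr0z zero_le
    have hsub : ballK ((y, u) : Sp n) r0 ⊆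
        (closedBall y r0) ×ˢ (Icc (u - r0^2) (u + r0^2)) := by
      intro z hz'
      have h0 : dK ((y,u) : Sp n) z ≤ r0 := hz'
      have hzz' := (dK_le_iff (z := ((y,u) : Sp n)) (y := z) hr0.le).1 h0
      have hzz : ‖y - z.1‖^4 + (u - z.2)^2 ≤ r0^4 := hzz'
      constructor
      · rw [mem_closedBall, dist_eq_norm, norm_sub_rev]
        have h4 : ‖y - z.1‖^4 ≤ r0^4 := by nlinarith [sq_nonneg (u - z.2), hzz]
        exact (pow_le_pow_iff_left₀ (norm_nonneg _) hr0.le (by norm_num)).1 h4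
      · have h2 : (u - z.2)^2 ≤ r0^4 := by
          nlinarith [pow_nonneg (norm_nonneg (y - z.1)) 4, hzz]
        constructor <;> nlinarith [h2, sq_nonneg r0]
    have hmono := measure_mono (μ := μ.prod volume) hsub
    rw [Measure.prod_prod, hz, zero_mul] at hmono
    exact absurd (h r0 hr0) (by simp [le_zero_iff.1 hmono])
  · intro hp r hr
    rw [main y hp u r hr]
    exact ENNReal.ofReal_pos.2 (by positivity)
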